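/- Let G be a connected undirected graph on n vertices, L its Laplacian, and D = diag(B·1_m) a binary diagonal matrix with at least one entry equal to 1. Then the smallest eigenvalue of L_B = L + D satisfies λ₁(L_B) ≤ 1, with equality if and only if D = I (all agents are leaders). -/

import Mathlib

open Matrix

def lapW {n : ℕ} (W : Matrix (Fin n) (Fin n) ℝ) : Matrix (Fin n) (Fin n) ℝ :=
  Matrix.diagonal (fun i => ∑ j, W i j) - W

def connectedW {n : ℕ} (W : Matrix (Fin n) (Fin n) ℝ) : Prop :=
  ∀ i j : Fin n, Relation.ReflTransGen (fun a b => W a b ≠ 0) i j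

/-- The quadratic form of the Laplacian of a symmetric nonnegative weight matrix is
nonnegative. -/
lemma lapW_quad_nonneg_aux {n : ℕ} (W : Matrix (Fin n) (Fin n) ℝ)
    (hsym : W.IsSymm) (hnonneg : ∀ i j, 0 ≤ W i j) (x : Fin n → ℝ) :
    0 ≤ x ⬝ᵥ ((Matrix.diagonal (fun i => ∑ j, W i j) - W) *ᵥ x) := by
  set A := ∑ i, ∑ j, W i j * x i ^ 2 with hA
  set B := ∑ i, ∑ j, W i j * (x i * x j) with hB
  have hswap : ∑ i, ∑ j, W i j * (x j)^2 = A := by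
    rw [hA, Finset.sum_comm]
    refine Finset.sum_congr rfl fun j _ => Finset.sum_congr rfl fun i _ => ?_
    rw [← hsym.apply i j]
  have h1 : x ⬝ᵥ ((Matrix.diagonal (fun i => ∑ j, W i j) - W) *ᵥ x) = A - B := by
    rw [sub_mulVec, dotProduct_sub]
    congr 1
    · rw [hA]
      simp only [dotProduct, mulVec_diagonal]
      refine Finset.sum_congr rfl fun i _ => ?_
      rw [Finset.sum_mul, Finset.mul_sum]
      exact Finset.sum_congr rfl fun j _ => by ring
    · rw [hB]
      simp only [dotProduct, mulVec, Finset.mul_sum]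
      exact Finset.sum_congr rfl fun i _ => Finset.sum_congr rfl fun j _ => by ring
  have h2 : ∑ i, ∑ j, W i j * (x i - x j)^2 = A - 2*B + A := by
    have e : ∀ i j : Fin n, W i j * (x i - x j)^2
        = W i j * x i ^2 - 2 * (W i j * (x i * x j)) + W i j * (x j)^2 := by
      intro i j; ring
    simp_rw [e, Finset.sum_add_distrib, Finset.sum_sub_distrib, ← Finset.mul_sum, hswap]
    rfl
  have h3 : 0 ≤ ∑ i, ∑ j, W i j * (x i - x j)^2 :=
    Finset.sum_nonneg fun i _ => Finset.sum_nonneg fun j _ =>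
      mul_nonneg (hnonneg i j) (sq_nonneg _)
  rw [h2] at h3
  rw [h1]
  linarith

/-- If `lam` is a lower bound for all (real) eigenvalues of the symmetric matrix `A`,
then the Rayleigh quotient of any vector is at least `lam`. -/
lemma rayleigh_lower_aux {n : ℕ} (A : Matrix (Fin n) (Fin n) ℝ) (hA : A.IsHermitian) (lam : ℝ)
    (h : ∀ μ : ℝ, (∃ v : Fin n → ℝ, v ≠ 0 ∧ A.mulVec v = μ • v) → lam ≤ μ)
    (x : Fin n → ℝ) :
    lam * (x ⬝ᵥ x) ≤ x ⬝ᵥ A *ᵥ x := by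
  set B := A - lam • (1 : Matrix (Fin n) (Fin n) ℝ) with hBdef
  have hB : B.IsHermitian := hA.sub (by simp [Matrix.IsHermitian])
  have heig : ∀ i, 0 ≤ hB.eigenvalues i := by
    intro i
    have hu := hB.mulVec_eigenvectorBasis i
    set u : Fin n → ℝ := ⇑(hB.eigenvectorBasis i) with hu_def
    have hune : u ≠ 0 := by
      intro h0
      have : hB.eigenvectorBasis i = 0 := by
        ext j; exact congrFun h0 j
      have hnorm := hB.eigenvectorBasis.orthonormal.1 i
      rw [this, norm_zero] at hnorm
      exact zero_ne_one hnorm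
    have hAu : A *ᵥ u = (hB.eigenvalues i + lam) • u := by
      have h3 : B *ᵥ u = A *ᵥ u - lam • u := by
        rw [hBdef, sub_mulVec, smul_mulVec, one_mulVec]
      rw [h3] at hu
      rw [sub_eq_iff_eq_add] at hu
      rw [hu, add_smul]
    have := h _ ⟨u, hune, hAu⟩
    linarith
  have hpsd : B.PosSemidef := hB.posSemidef_iff_eigenvalues_nonneg.mpr heig
  have := hpsd.dotProduct_mulVec_nonneg x
  simp only [hBdef, sub_mulVec, smul_mulVec, one_mulVec, dotProduct_sub,
    dotProduct_smul, star_trivial, smul_eq_mul] at this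
  linarith

/-- the smallest eigenvalue of the perturbed Laplacian
`L_B = L + diagonal d` (with `d` a 0/1 vector, not identically zero) satisfies
`λ₁(L_B) ≤ 1`, with equality if and only if `d = 1` (all agents leaders). -/
theorem smallest_eigenvalue_perturbed_laplacian_le_one
    {n : ℕ} (hn : 0 < n) (W : Matrix (Fin n) (Fin n) ℝ)
    (hsym : W.IsSymm) (hnonneg : ∀ i j, 0 ≤ W i j)
    (hconn : connectedW W)
    (d : Fin n → ℝ) (hd : ∀ i, d i = 0 ∨ d i = 1) (hdpos : ∃ i, d i = 1)
    (lam1 : ℝ)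
    (hlam1 : IsLeast {μ : ℝ | ∃ v : Fin n → ℝ, v ≠ 0 ∧
      (lapW W + Matrix.diagonal d).mulVec v = μ • v} lam1) :
    lam1 ≤ 1 ∧ (lam1 = 1 ↔ d = fun _ => 1) := by
  set L := lapW W with hL
  set A := L + Matrix.diagonal d with hAdef
  have hLo : L *ᵥ (fun _ => (1:ℝ)) = 0 := by
    funext i
    simp [hL, lapW, sub_mulVec, mulVec_diagonal, mulVec, dotProduct, diagonal_apply,
      Finset.sum_ite_eq]
  have hAo : A *ᵥ (fun _ => (1:ℝ)) = d := by
    funext i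
    rw [hAdef, add_mulVec]
    simp [hLo, mulVec_diagonal]
  have hAherm : A.IsHermitian := by
    show Aᴴ = A
    rw [hAdef, conjTranspose_add]
    congr 1
    · show Lᵀ = L
      rw [hL, lapW, transpose_sub, diagonal_transpose, hsym.eq]
    · show (Matrix.diagonal d)ᵀ = _
      rw [diagonal_transpose]
  have hray := rayleigh_lower_aux A hAherm lam1 (fun μ hμ => hlam1.2 hμ) (fun _ => (1:ℝ))
  have h1 : ((fun _ => (1:ℝ)) : Fin n → ℝ) ⬝ᵥ ((fun _ => (1:ℝ)) : Fin n → ℝ) = (n : ℝ) := by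
    simp [dotProduct]
  have h2 : ((fun _ => (1:ℝ)) : Fin n → ℝ) ⬝ᵥ A *ᵥ ((fun _ => (1:ℝ)) : Fin n → ℝ)
      = ∑ i, d i := by
    rw [hAo]; simp [dotProduct]
  rw [h1, h2] at hray
  have hsum_le : ∑ i, d i ≤ (n : ℝ) := by
    calc ∑ i, d i ≤ ∑ _i : Fin n, (1 : ℝ) :=
          Finset.sum_le_sum fun i _ => by rcases hd i with h | h <;> rw [h] <;> norm_num
      _ = n := by simp
  have hnpos : (0 : ℝ) < n := by exact_mod_cast hn
  have hle : lam1 ≤ 1 := by nlinarith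
  refine ⟨hle, ?_, ?_⟩
  · -- lam1 = 1 → d = 1
    intro h
    rw [h, one_mul] at hray
    have hzero : ∑ i, (1 - d i) = 0 := by
      rw [Finset.sum_sub_distrib]
      simp only [Finset.sum_const, Finset.card_univ, Fintype.card_fin, nsmul_eq_mul, mul_one]
      linarith
    funext i
    have h1d := (Finset.sum_eq_zero_iff_of_nonneg (fun i _ => by
      rcases hd i with h | h <;> rw [h] <;> norm_num)).mp hzero i (Finset.mem_univ i)
    show d i = 1
    linarith
  · -- d = 1 → lam1 = 1
    intro h
    have hone : (fun _ => (1:ℝ)) ≠ (0 : Fin n → ℝ) := by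
      intro h0
      have := congrFun h0 ⟨0, hn⟩
      simpa using this
    have hmem : (1 : ℝ) ∈ {μ : ℝ | ∃ v : Fin n → ℝ, v ≠ 0 ∧ A.mulVec v = μ • v} := by
      refine ⟨fun _ => (1:ℝ), hone, ?_⟩
      rw [hAo, h, one_smul]
    have hub : lam1 ≤ 1 := hlam1.2 hmem
    obtain ⟨v, hvne, hv⟩ := hlam1.1
    have hq : v ⬝ᵥ A *ᵥ v = lam1 * (v ⬝ᵥ v) := by
      rw [hv]; simp [dotProduct, Finset.mul_sum]; exact Finset.sum_congr rfl fun i _ => by ring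
    have hquad : v ⬝ᵥ A *ᵥ v = v ⬝ᵥ L *ᵥ v + ∑ i, v i ^ 2 := by
      rw [hAdef, add_mulVec, dotProduct_add]
      congr 1
      simp only [dotProduct, mulVec_diagonal, h]
      exact Finset.sum_congr rfl fun i _ => by ring
    have hLpsd : 0 ≤ v ⬝ᵥ L *ᵥ v := lapW_quad_nonneg_aux W hsym hnonneg v
    have hvv : v ⬝ᵥ v = ∑ i, v i ^ 2 := by
      simp only [dotProduct]
      exact Finset.sum_congr rfl fun i _ => by ring
    have hvpos : 0 < ∑ i, v i ^ 2 := by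
      obtain ⟨i, hi⟩ := Function.ne_iff.mp hvne
      exact Finset.sum_pos' (fun j _ => sq_nonneg _)
        ⟨i, Finset.mem_univ i, (sq_nonneg _).lt_of_ne (Ne.symm (pow_ne_zero 2 hi))⟩
    nlinarith [hq, hquad, hLpsd, hvv, hvpos]
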